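/- Let p, M ≥ 1, let γ_1, …, γ_M ∈ ℝ, for each 1 ≤ i ≤ p and 1 ≤ m ≤ M let h_{im} : ℝ → ℝ be differentiable with measurable derivative, and let ρ_1, …, ρ_p : ℝ → ℝ be nonnegative measurable probability densities. Assume for every i, m that h_{im} and h'_{im} are square-integrable with respect to the measure with density ρ_i against Lebesgue measure. Define f(x) = γ_0 + Σ_{m=1}^M γ_m Π_{k=1}^p h_{km}(x_k) and ρ(x) = Π_{i=1}^p ρ_i(x_i). Then for each i, the diagonal entry of the C matrix of (f, ρ) satisfies C_{ii} = Σ_{m1=1}^M Σ_{m2=1}^M γ_{m1} γ_{m2} I_3^{(i)}[m1, m2] Π_{k ≠ i} I_2^{(k)}[m1, m2], where I_2^{(k)}[m1, m2] = ∫_ℝ h_{k m1}(x) h_{k m2}(x) ρ_k(x) dx and I_3^{(i)}[m1, m2] = ∫_ℝ h'_{i m1}(x) h'_{i m2}(x) ρ_i(x) dx. -/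

import Mathlib

open MeasureTheory Matrix

/-- The `i`-th partial derivative of `f` at `x`. -/
noncomputable def partialDeriv' {p : ℕ} (f : (Fin p → ℝ) → ℝ) (i : Fin p)
    (x : Fin p → ℝ) : ℝ :=
  fderiv ℝ f x (Pi.single i 1)

/-- The `C` matrix of `(f, ρ)`: `C i j = ∫ ∂f/∂xᵢ ∂f/∂xⱼ ρ`. -/
noncomputable def Cmat {p : ℕ} (f : (Fin p → ℝ) → ℝ) (ρ : (Fin p → ℝ) → ℝ) :
    Matrix (Fin p) (Fin p) ℝ :=
  Matrix.of fun i j => ∫ x, partialDeriv' f i x * partialDeriv' f j x * ρ x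

/-- L² × L² integrability against a density. -/
lemma aux_int {ρ : ℝ → ℝ} (hρ_nonneg : ∀ x, 0 ≤ ρ x) (hρ_meas : Measurable ρ)
    {u v : ℝ → ℝ}
    (hu : MemLp u 2 (volume.withDensity fun x => ENNReal.ofReal (ρ x)))
    (hv : MemLp v 2 (volume.withDensity fun x => ENNReal.ofReal (ρ x))) :
    Integrable (fun x => u x * v x * ρ x) := by
  have h1 : MemLp (u • v) 1 (volume.withDensity fun x => ENNReal.ofReal (ρ x)) :=
    hv.smul hu (hpqr := ⟨by simp [ENNReal.inv_two_add_inv_two]⟩)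
  have h2 := memLp_one_iff_integrable.mp h1
  rw [integrable_withDensity_iff (hρ_meas.ennreal_ofReal)
    (ae_of_all _ fun x => ENNReal.ofReal_lt_top)] at h2
  have heq : (fun x => u x * v x * ρ x)
      = fun x => (u • v) x * (ENNReal.ofReal (ρ x)).toReal := by
    funext x
    simp [ENNReal.toReal_ofReal (hρ_nonneg x)]
  rw [heq]
  exact h2

/-- Derivative of a single coordinate factor. -/
lemma aux_factor {p : ℕ} (g : ℝ → ℝ) (hg : Differentiable ℝ g) (k : Fin p) (x : Fin p → ℝ) :
    HasFDerivAt (fun x : Fin p → ℝ => g (x k))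
      ((deriv g (x k)) • (ContinuousLinearMap.proj (R := ℝ) (φ := fun _ : Fin p => ℝ) k)) x :=
  (hg (x k)).hasDerivAt.comp_hasFDerivAt x
    (ContinuousLinearMap.proj (R := ℝ) (φ := fun _ : Fin p => ℝ) k).hasFDerivAt

/-- The partial derivative of the tensor-sum function. -/
lemma aux_partial {p M : ℕ} (γ0 : ℝ) (γ : Fin M → ℝ) (h : Fin p → Fin M → ℝ → ℝ)
    (hh : ∀ i m, Differentiable ℝ (h i m))
    (f : (Fin p → ℝ) → ℝ)
    (hfdef : ∀ x, f x = γ0 + ∑ m, γ m * ∏ k, h k m (x k)) (i : Fin p) :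
    ∀ x, partialDeriv' f i x
      = ∑ m, γ m * (deriv (h i m) (x i) * ∏ k ∈ Finset.univ.erase i, h k m (x k)) := by
  intro x
  have hf' : HasFDerivAt f (∑ m, γ m • ∑ k, (∏ j ∈ Finset.univ.erase k, h j m (x j)) •
      ((deriv (h k m) (x k)) •
        (ContinuousLinearMap.proj (R := ℝ) (φ := fun _ : Fin p => ℝ) k))) x := by
    have hfe : f = fun x => γ0 + ∑ m, γ m * ∏ k, h k m (x k) := funext hfdef
    rw [hfe]
    apply HasFDerivAt.const_add
    apply HasFDerivAt.fun_sum
    intro m _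
    exact (HasFDerivAt.finset_prod (fun k _ => aux_factor (h k m) (hh k m) k x)).const_mul (γ m)
  rw [partialDeriv', hf'.fderiv]
  simp only [ContinuousLinearMap.coe_sum', Finset.sum_apply, ContinuousLinearMap.coe_smul',
    Pi.smul_apply, ContinuousLinearMap.proj_apply, Pi.single_apply, smul_eq_mul]
  refine Finset.sum_congr rfl fun m _ => ?_
  simp only [mul_ite, mul_one, mul_zero, Finset.sum_ite_eq', Finset.mem_univ, if_true]
  ring

theorem Cmat_diagonal_tensor {p M : ℕ} (hp : 1 ≤ p) (hM : 1 ≤ M)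
    (γ0 : ℝ) (γ : Fin M → ℝ) (h : Fin p → Fin M → ℝ → ℝ)
    (hh : ∀ i m, Differentiable ℝ (h i m))
    (hh' : ∀ i m, Measurable (deriv (h i m)))
    (ρ : Fin p → ℝ → ℝ) (hρ_nonneg : ∀ i x, 0 ≤ ρ i x)
    (hρ_meas : ∀ i, Measurable (ρ i))
    (hρ_int : ∀ i, Integrable (ρ i)) (hρ_prob : ∀ i, ∫ x, ρ i x = 1)
    (hsq : ∀ i m, MemLp (h i m) 2 (volume.withDensity fun x => ENNReal.ofReal (ρ i x)))
    (hsq' : ∀ i m,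
      MemLp (deriv (h i m)) 2 (volume.withDensity fun x => ENNReal.ofReal (ρ i x)))
    (f : (Fin p → ℝ) → ℝ)
    (hfdef : ∀ x, f x = γ0 + ∑ m, γ m * ∏ k, h k m (x k))
    (ρprod : (Fin p → ℝ) → ℝ) (hρprod : ∀ x, ρprod x = ∏ i, ρ i (x i)) :
    ∀ i, Cmat f ρprod i i =
      ∑ m1, ∑ m2, γ m1 * γ m2 *
        (∫ x, deriv (h i m1) x * deriv (h i m2) x * ρ i x) *
        ∏ k ∈ Finset.univ.erase i, ∫ x, h k m1 x * h k m2 x * ρ k x := by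
  intro i
  set G : Fin M → Fin M → Fin p → ℝ → ℝ := fun m1 m2 k t =>
    (if k = i then deriv (h k m1) t * deriv (h k m2) t else h k m1 t * h k m2 t) * ρ k t
    with hG
  have key := aux_partial γ0 γ h hh f hfdef i
  -- pointwise expansion of the integrand
  have hpt : ∀ x : Fin p → ℝ, partialDeriv' f i x * partialDeriv' f i x * ρprod x
      = ∑ m1, ∑ m2, γ m1 * γ m2 * ∏ k, G m1 m2 k (x k) := by
    intro x
    rw [key x, hρprod x, Finset.sum_mul_sum, Finset.sum_mul]
    refine Finset.sum_congr rfl fun m1 _ => ?_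
    rw [Finset.sum_mul]
    refine Finset.sum_congr rfl fun m2 _ => ?_
    have h1 : ∏ k, G m1 m2 k (x k)
        = (deriv (h i m1) (x i) * deriv (h i m2) (x i) * ρ i (x i)) *
          ∏ k ∈ Finset.univ.erase i, (h k m1 (x k) * h k m2 (x k) * ρ k (x k)) := by
      rw [← Finset.mul_prod_erase _ _ (Finset.mem_univ i)]
      congr 1
      · simp [hG]
      · exact Finset.prod_congr rfl fun k hk => by simp [hG, Finset.ne_of_mem_erase hk]
    have h2 : ∏ k, ρ k (x k) = ρ i (x i) * ∏ k ∈ Finset.univ.erase i, ρ k (x k) :=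
      (Finset.mul_prod_erase _ _ (Finset.mem_univ i)).symm
    rw [h1, h2]
    simp only [Finset.prod_mul_distrib]
    ring
  -- integrability of each factor
  have hGint : ∀ m1 m2 (k : Fin p), Integrable (G m1 m2 k) := by
    intro m1 m2 k
    by_cases hk : k = i
    · subst hk
      simpa [hG] using aux_int (hρ_nonneg k) (hρ_meas k) (hsq' k m1) (hsq' k m2)
    · simpa [hG, hk] using aux_int (hρ_nonneg k) (hρ_meas k) (hsq k m1) (hsq k m2)
  have hprodint : ∀ m1 m2, Integrable (fun x : Fin p → ℝ => ∏ k, G m1 m2 k (x k)) :=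
    fun m1 m2 => Integrable.fintype_prod (fun k => hGint m1 m2 k)
  -- main computation
  have : Cmat f ρprod i i
      = ∫ x : Fin p → ℝ, ∑ m1, ∑ m2, γ m1 * γ m2 * ∏ k, G m1 m2 k (x k) := by
    simp only [Cmat, Matrix.of_apply]
    exact integral_congr_ae (ae_of_all _ hpt)
  rw [this]
  rw [integral_finset_sum _ (fun m1 _ => integrable_finset_sum _
    (fun m2 _ => ((hprodint m1 m2).const_mul _)))]
  refine Finset.sum_congr rfl fun m1 _ => ?_
  rw [integral_finset_sum _ (fun m2 _ => ((hprodint m1 m2).const_mul _))]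
  refine Finset.sum_congr rfl fun m2 _ => ?_
  rw [integral_const_mul, integral_fintype_prod_volume_eq_prod (f := fun k => G m1 m2 k)]
  rw [← Finset.mul_prod_erase _ _ (Finset.mem_univ i)]
  have hGi : G m1 m2 i = fun t => deriv (h i m1) t * deriv (h i m2) t * ρ i t := by
    funext t; simp [hG]
  rw [hGi, ← mul_assoc]
  congr 1
  refine Finset.prod_congr rfl fun k hk => ?_
  have : G m1 m2 k = fun t => h k m1 t * h k m2 t * ρ k t := by
    funext t; simp [hG, Finset.ne_of_mem_erase hk]
  rw [this]
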